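/- Let (μ_t)_{t≥0} be a vaguely continuous convolution semigroup of sub-probability measures on [0,∞) in the sense that μ_0 = δ_0, μ_t([0,∞)) ≤ 1 for all t, and μ_{t+s} is the image of the product measure μ_t ⊗ μ_s under addition (s₁,s₂) ↦ s₁+s₂. Define P^μ_t f(x) := ∫_0^∞ P_s f(x) μ_t(ds) for measurable f ≥ 0. Then: (a) (P^μ_t)_{t≥0} is a sub-Markovian semigroup of kernels on E; (b) every function that is supermedian for (P_t) is supermedian for (P^μ_t); (c) if u = u₁ − u₂ with u₁, u₂ : E → [0,∞) real-valued supermedian functions for (P_t), then V^{(P^μ_t)}(u) ≤ u₁ + u₂ pointwise. -/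
import Mathlib


open MeasureTheory ProbabilityTheory ENNReal Filter
open scoped NNReal

/-- A sub-Markovian semigroup of kernels on a measurable space `E`. -/
structure SubMarkovSemigroup (E : Type*) [MeasurableSpace E] where
  P : ℝ≥0 → Kernel E E
  subMarkov : ∀ t x, P t x Set.univ ≤ 1
  map_zero : ∀ (f : E → ℝ≥0∞), Measurable f → ∀ x, ∫⁻ y, f y ∂(P 0 x) = f x
  map_add : ∀ (t s : ℝ≥0) (f : E → ℝ≥0∞), Measurable f → ∀ x,
      ∫⁻ y, f y ∂(P (t + s) x) = ∫⁻ y, ∫⁻ z, f z ∂(P s y) ∂(P t x)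

/-- Action of the time-`t` kernel on real-valued functions: `P_t f = P_t f⁺ - P_t f⁻`. -/
noncomputable def SubMarkovSemigroup.act {E : Type*} [MeasurableSpace E]
    (S : SubMarkovSemigroup E) (t : ℝ≥0) (f : E → ℝ) (x : E) : ℝ :=
  ∫ y, f y ∂(S.P t x)

/-- A finite partition `0 = t_0 ≤ t_1 ≤ … ≤ t_n < ∞` of `ℝ₊`. -/
structure FinPartition where
  n : ℕ
  t : Fin (n + 1) → ℝ≥0
  mono : Monotone t
  first : t 0 = 0

/-- `V_τ(u) = Σ_{i=1}^n P_{t_{i-1}} |u - P_{t_i - t_{i-1}} u| + P_{t_n}|u|`. -/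
noncomputable def SubMarkovSemigroup.V {E : Type*} [MeasurableSpace E]
    (S : SubMarkovSemigroup E) (u : E → ℝ) (τ : FinPartition) (x : E) : ℝ :=
  (∑ i : Fin τ.n, S.act (τ.t i.castSucc)
      (fun y => |u y - S.act (τ.t i.succ - τ.t i.castSucc) u y|) x)
  + S.act (τ.t (Fin.last τ.n)) (fun y => |u y|) x

/-- Subordinated semigroup acting on `[0,∞]`-valued functions:
`P^μ_t f (x) = ∫_0^∞ P_s f (x) μ_t(ds)`. -/
noncomputable def SubMarkovSemigroup.subord {E : Type*} [MeasurableSpace E]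
    (S : SubMarkovSemigroup E) (m : ℝ≥0 → Measure ℝ≥0) (t : ℝ≥0)
    (f : E → ℝ≥0∞) (x : E) : ℝ≥0∞ :=
  ∫⁻ s, (∫⁻ y, f y ∂(S.P s x)) ∂(m t)

/-- Subordinated semigroup acting on real-valued functions. -/
noncomputable def SubMarkovSemigroup.subordR {E : Type*} [MeasurableSpace E]
    (S : SubMarkovSemigroup E) (m : ℝ≥0 → Measure ℝ≥0) (t : ℝ≥0)
    (f : E → ℝ) (x : E) : ℝ :=
  ∫ s, S.act s f x ∂(m t)

/-- `V_τ^{(P^μ_t)}(u)`, the variation of `u` along the partition `τ` computed with the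
subordinated semigroup. -/
noncomputable def SubMarkovSemigroup.Vsub {E : Type*} [MeasurableSpace E]
    (S : SubMarkovSemigroup E) (m : ℝ≥0 → Measure ℝ≥0) (u : E → ℝ)
    (τ : FinPartition) (x : E) : ℝ :=
  (∑ i : Fin τ.n, S.subordR m (τ.t i.castSucc)
      (fun y => |u y - S.subordR m (τ.t i.succ - τ.t i.castSucc) u y|) x)
  + S.subordR m (τ.t (Fin.last τ.n)) (fun y => |u y|) x


section Helpers

variable {E : Type*} [MeasurableSpace E] (S : SubMarkovSemigroup E)
  (m : ℝ≥0 → Measure ℝ≥0)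

lemma smg_finite (hmsub : ∀ t : ℝ≥0, m t Set.univ ≤ 1) (t : ℝ≥0) :
    IsFiniteMeasure (m t) := ⟨(hmsub t).trans_lt one_lt_top⟩

lemma smg_meas
    (hJM : ∀ f : E → ℝ≥0∞, Measurable f →
      Measurable (fun pr : ℝ≥0 × E => ∫⁻ y, f y ∂(S.P pr.1 pr.2)))
    (hmsub : ∀ t : ℝ≥0, m t Set.univ ≤ 1)
    (t : ℝ≥0) {f : E → ℝ≥0∞} (hf : Measurable f) :
    Measurable (fun x => S.subord m t f x) := by
  haveI := smg_finite m hmsub t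
  exact Measurable.lintegral_prod_right' ((hJM f hf).comp measurable_swap)

lemma smg_mono (t : ℝ≥0) {f g : E → ℝ≥0∞} (h : ∀ y, f y ≤ g y) (x : E) :
    S.subord m t f x ≤ S.subord m t g x :=
  lintegral_mono fun _ => lintegral_mono h

lemma smg_superm (hmsub : ∀ t : ℝ≥0, m t Set.univ ≤ 1) {g : E → ℝ≥0∞}
    (hg : ∀ (t : ℝ≥0) (x : E), ∫⁻ y, g y ∂(S.P t x) ≤ g x)
    (t : ℝ≥0) (x : E) : S.subord m t g x ≤ g x := by
  calc S.subord m t g x ≤ ∫⁻ _, g x ∂(m t) := lintegral_mono fun s => hg s x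
    _ = g x * m t Set.univ := lintegral_const _
    _ ≤ g x * 1 := mul_le_mul_right (hmsub t) _
    _ = g x := mul_one _

lemma smg_zero
    (hJM : ∀ f : E → ℝ≥0∞, Measurable f →
      Measurable (fun pr : ℝ≥0 × E => ∫⁻ y, f y ∂(S.P pr.1 pr.2)))
    (hm0 : m 0 = Measure.dirac 0)
    {f : E → ℝ≥0∞} (hf : Measurable f) (x : E) : S.subord m 0 f x = f x := by
  have hK : Measurable (fun s : ℝ≥0 => ∫⁻ y, f y ∂(S.P s x)) :=
    (hJM f hf).comp measurable_prodMk_right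
  unfold SubMarkovSemigroup.subord
  rw [hm0, lintegral_dirac' 0 hK]
  exact S.map_zero f hf x

lemma smg_add
    (hJM : ∀ f : E → ℝ≥0∞, Measurable f →
      Measurable (fun pr : ℝ≥0 × E => ∫⁻ y, f y ∂(S.P pr.1 pr.2)))
    (hmsub : ∀ t : ℝ≥0, m t Set.univ ≤ 1)
    (hmconv : ∀ t s : ℝ≥0,
      m (t + s) = Measure.map (fun pr : ℝ≥0 × ℝ≥0 => pr.1 + pr.2) ((m t).prod (m s)))
    (t s : ℝ≥0) {f : E → ℝ≥0∞} (hf : Measurable f) (x : E) :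
    S.subord m (t + s) f x = S.subord m t (fun y => S.subord m s f y) x := by
  haveI := smg_finite m hmsub t
  haveI := smg_finite m hmsub s
  have hFm := hJM f hf
  have hK : Measurable (fun r : ℝ≥0 => ∫⁻ y, f y ∂(S.P r x)) :=
    hFm.comp measurable_prodMk_right
  calc S.subord m (t + s) f x
      = ∫⁻ r, (∫⁻ y, f y ∂(S.P r x)) ∂(m (t + s)) := rfl
    _ = ∫⁻ pr : ℝ≥0 × ℝ≥0, (∫⁻ y, f y ∂(S.P (pr.1 + pr.2) x)) ∂((m t).prod (m s)) := by
        rw [hmconv, lintegral_map hK measurable_add]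
    _ = ∫⁻ a, ∫⁻ b, (∫⁻ y, f y ∂(S.P (a + b) x)) ∂(m s) ∂(m t) := by
        exact lintegral_prod _ ((hK.comp measurable_add).aemeasurable)
    _ = ∫⁻ a, ∫⁻ y, (∫⁻ b, ∫⁻ z, f z ∂(S.P b y) ∂(m s)) ∂(S.P a x) ∂(m t) := by
        refine lintegral_congr fun a => ?_
        haveI : IsFiniteMeasure (S.P a x) := ⟨(S.subMarkov a x).trans_lt one_lt_top⟩
        have h1 : ∫⁻ b, (∫⁻ y, f y ∂(S.P (a + b) x)) ∂(m s)
            = ∫⁻ b, (∫⁻ y, ∫⁻ z, f z ∂(S.P b y) ∂(S.P a x)) ∂(m s) :=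
          lintegral_congr fun b => S.map_add a b f hf x
        rw [h1]
        exact lintegral_lintegral_swap hFm.aemeasurable
    _ = S.subord m t (fun y => S.subord m s f y) x := rfl

lemma act_nonneg_eq (t : ℝ≥0) {f : E → ℝ} (hf : Measurable f) (h0 : ∀ y, 0 ≤ f y) (x : E) :
    S.act t f x = (∫⁻ y, ENNReal.ofReal (f y) ∂(S.P t x)).toReal :=
  integral_eq_lintegral_of_nonneg_ae (ae_of_all _ h0) hf.aestronglyMeasurable

lemma smg_subordR_eq
    (hJM : ∀ f : E → ℝ≥0∞, Measurable f →
      Measurable (fun pr : ℝ≥0 × E => ∫⁻ y, f y ∂(S.P pr.1 pr.2)))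
    (t : ℝ≥0) {f : E → ℝ} (hf : Measurable f) (h0 : ∀ y, 0 ≤ f y) (x : E)
    (hfin : ∀ s : ℝ≥0, ∫⁻ y, ENNReal.ofReal (f y) ∂(S.P s x) ≠ ⊤) :
    S.subordR m t f x = (S.subord m t (fun y => ENNReal.ofReal (f y)) x).toReal := by
  have hof : Measurable fun y => ENNReal.ofReal (f y) := ENNReal.measurable_ofReal.comp hf
  have hK : Measurable fun s : ℝ≥0 => ∫⁻ y, ENNReal.ofReal (f y) ∂(S.P s x) :=
    (hJM _ hof).comp measurable_prodMk_right
  calc S.subordR m t f x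
      = ∫ s, (∫⁻ y, ENNReal.ofReal (f y) ∂(S.P s x)).toReal ∂(m t) :=
        integral_congr_ae (ae_of_all _ fun s => act_nonneg_eq S s hf h0 x)
    _ = (∫⁻ s, (∫⁻ y, ENNReal.ofReal (f y) ∂(S.P s x)) ∂(m t)).toReal :=
        integral_toReal hK.aemeasurable (ae_of_all _ fun s => (hfin s).lt_top)

lemma smg_integrable_of_fin {u : E → ℝ} (hu : Measurable u) (h0 : ∀ y, 0 ≤ u y)
    {μ : Measure E} (hb : ∫⁻ y, ENNReal.ofReal (u y) ∂μ ≠ ⊤) : Integrable u μ := by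
  have h := integrable_toReal_of_lintegral_ne_top
    ((ENNReal.measurable_ofReal.comp hu)).aemeasurable hb
  refine h.congr (ae_of_all _ fun z => ?_)
  exact ENNReal.toReal_ofReal (h0 z)

lemma smg_partC
    (hJM : ∀ f : E → ℝ≥0∞, Measurable f →
      Measurable (fun pr : ℝ≥0 × E => ∫⁻ y, f y ∂(S.P pr.1 pr.2)))
    (hm0 : m 0 = Measure.dirac 0)
    (hmsub : ∀ t : ℝ≥0, m t Set.univ ≤ 1)
    (hmconv : ∀ t s : ℝ≥0,
      m (t + s) = Measure.map (fun pr : ℝ≥0 × ℝ≥0 => pr.1 + pr.2) ((m t).prod (m s)))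
    (u₁ u₂ : E → ℝ) (hu₁ : Measurable u₁) (hu₂ : Measurable u₂)
    (h01 : ∀ x, 0 ≤ u₁ x) (h02 : ∀ x, 0 ≤ u₂ x)
    (hsm₁ : ∀ (t : ℝ≥0) (x : E),
      ∫⁻ y, ENNReal.ofReal (u₁ y) ∂(S.P t x) ≤ ENNReal.ofReal (u₁ x))
    (hsm₂ : ∀ (t : ℝ≥0) (x : E),
      ∫⁻ y, ENNReal.ofReal (u₂ y) ∂(S.P t x) ≤ ENNReal.ofReal (u₂ x))
    (x : E) (τ : FinPartition) :
    S.Vsub m (fun y => u₁ y - u₂ y) τ x ≤ u₁ x + u₂ x := by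
  set u : E → ℝ := fun y => u₁ y - u₂ y with hu_def
  set g₁ : E → ℝ≥0∞ := fun y => ENNReal.ofReal (u₁ y) with hg₁_def
  set g₂ : E → ℝ≥0∞ := fun y => ENNReal.ofReal (u₂ y) with hg₂_def
  set G : E → ℝ≥0∞ := fun y => g₁ y + g₂ y with hG_def
  have hg₁ : Measurable g₁ := ENNReal.measurable_ofReal.comp hu₁
  have hg₂ : Measurable g₂ := ENNReal.measurable_ofReal.comp hu₂
  have hGm : Measurable G := hg₁.add hg₂
  have hg₁fin : ∀ y, g₁ y ≠ ⊤ := fun y => ofReal_ne_top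
  have hg₂fin : ∀ y, g₂ y ≠ ⊤ := fun y => ofReal_ne_top
  have hGfin : ∀ y, G y ≠ ⊤ := fun y => ENNReal.add_ne_top.2 ⟨hg₁fin y, hg₂fin y⟩
  have hsmG : ∀ (t : ℝ≥0) (z : E), ∫⁻ y, G y ∂(S.P t z) ≤ G z := fun t z => by
    rw [hG_def]
    calc ∫⁻ y, g₁ y + g₂ y ∂(S.P t z)
        = (∫⁻ y, g₁ y ∂(S.P t z)) + ∫⁻ y, g₂ y ∂(S.P t z) := lintegral_add_left hg₁ _
      _ ≤ g₁ z + g₂ z := add_le_add (hsm₁ t z) (hsm₂ t z)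
  have hQG : ∀ (t : ℝ≥0) (z : E), S.subord m t G z ≤ G z := smg_superm S m hmsub hsmG
  have hQ1 : ∀ (t : ℝ≥0) (z : E), S.subord m t g₁ z ≤ g₁ z := smg_superm S m hmsub hsm₁
  have hQ2 : ∀ (t : ℝ≥0) (z : E), S.subord m t g₂ z ≤ g₂ z := smg_superm S m hmsub hsm₂
  have hQ1fin : ∀ (t : ℝ≥0) (z : E), S.subord m t g₁ z ≠ ⊤ :=
    fun t z => ne_top_of_le_ne_top (hg₁fin z) (hQ1 t z)
  have hQ2fin : ∀ (t : ℝ≥0) (z : E), S.subord m t g₂ z ≠ ⊤ :=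
    fun t z => ne_top_of_le_ne_top (hg₂fin z) (hQ2 t z)
  -- split subord of G
  have hsplit : ∀ (h : ℝ≥0) (y : E),
      S.subord m h G y = S.subord m h g₁ y + S.subord m h g₂ y := fun h y => by
    have hK1 : Measurable fun s : ℝ≥0 => ∫⁻ z, g₁ z ∂(S.P s y) :=
      (hJM g₁ hg₁).comp measurable_prodMk_right
    calc S.subord m h G y
        = ∫⁻ s, ((∫⁻ z, g₁ z ∂(S.P s y)) + ∫⁻ z, g₂ z ∂(S.P s y)) ∂(m h) :=
          lintegral_congr fun s => by
            rw [hG_def]; exact lintegral_add_left hg₁ _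
      _ = S.subord m h g₁ y + S.subord m h g₂ y := lintegral_add_left hK1 _
  -- subordR of u splits
  have hint₁ : ∀ (s : ℝ≥0) (y : E), Integrable u₁ (S.P s y) := fun s y =>
    smg_integrable_of_fin hu₁ h01 (ne_top_of_le_ne_top (hg₁fin y) (hsm₁ s y))
  have hint₂ : ∀ (s : ℝ≥0) (y : E), Integrable u₂ (S.P s y) := fun s y =>
    smg_integrable_of_fin hu₂ h02 (ne_top_of_le_ne_top (hg₂fin y) (hsm₂ s y))
  have hkey : ∀ (h : ℝ≥0) (y : E), S.subordR m h u y
      = (S.subord m h g₁ y).toReal - (S.subord m h g₂ y).toReal := fun h y => by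
    haveI := smg_finite m hmsub h
    have hK1 : Measurable fun s : ℝ≥0 => ∫⁻ z, g₁ z ∂(S.P s y) :=
      (hJM g₁ hg₁).comp measurable_prodMk_right
    have hK2 : Measurable fun s : ℝ≥0 => ∫⁻ z, g₂ z ∂(S.P s y) :=
      (hJM g₂ hg₂).comp measurable_prodMk_right
    have e₁ : ∀ s : ℝ≥0, S.act s u₁ y = (∫⁻ z, g₁ z ∂(S.P s y)).toReal :=
      fun s => act_nonneg_eq S s hu₁ h01 y
    have e₂ : ∀ s : ℝ≥0, S.act s u₂ y = (∫⁻ z, g₂ z ∂(S.P s y)).toReal :=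
      fun s => act_nonneg_eq S s hu₂ h02 y
    have I₁ : Integrable (fun s => S.act s u₁ y) (m h) := by
      have h' := integrable_toReal_of_lintegral_ne_top hK1.aemeasurable (hQ1fin h y)
      exact h'.congr (ae_of_all _ fun s => (e₁ s).symm)
    have I₂ : Integrable (fun s => S.act s u₂ y) (m h) := by
      have h' := integrable_toReal_of_lintegral_ne_top hK2.aemeasurable (hQ2fin h y)
      exact h'.congr (ae_of_all _ fun s => (e₂ s).symm)
    calc S.subordR m h u y
        = ∫ s, (S.act s u₁ y - S.act s u₂ y) ∂(m h) :=
          integral_congr_ae (ae_of_all _ fun s => integral_sub (hint₁ s y) (hint₂ s y))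
      _ = (∫ s, S.act s u₁ y ∂(m h)) - ∫ s, S.act s u₂ y ∂(m h) := integral_sub I₁ I₂
      _ = (S.subord m h g₁ y).toReal - (S.subord m h g₂ y).toReal := by
          rw [show (∫ s, S.act s u₁ y ∂(m h)) = S.subordR m h u₁ y from rfl,
            show (∫ s, S.act s u₂ y ∂(m h)) = S.subordR m h u₂ y from rfl,
            smg_subordR_eq S m hJM h hu₁ h01 y
              (fun s => ne_top_of_le_ne_top (hg₁fin y) (hsm₁ s y)),
            smg_subordR_eq S m hJM h hu₂ h02 y
              (fun s => ne_top_of_le_ne_top (hg₂fin y) (hsm₂ s y))]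
  have hQu : ∀ h : ℝ≥0, Measurable (fun y => S.subordR m h u y) := fun h => by
    have : (fun y => S.subordR m h u y)
        = fun y => (S.subord m h g₁ y).toReal - (S.subord m h g₂ y).toReal :=
      funext (hkey h)
    rw [this]
    exact ((smg_meas S m hJM hmsub h hg₁).ennreal_toReal).sub
      ((smg_meas S m hJM hmsub h hg₂).ennreal_toReal)
  have hB₁ : ∀ (h : ℝ≥0) (y : E), (S.subord m h g₁ y).toReal ≤ u₁ y := fun h y => by
    have := ENNReal.toReal_mono (hg₁fin y) (hQ1 h y)
    rwa [hg₁_def, ENNReal.toReal_ofReal (h01 y)] at this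
  have hB₂ : ∀ (h : ℝ≥0) (y : E), (S.subord m h g₂ y).toReal ≤ u₂ y := fun h y => by
    have := ENNReal.toReal_mono (hg₂fin y) (hQ2 h y)
    rwa [hg₂_def, ENNReal.toReal_ofReal (h02 y)] at this
  have hGtoReal : ∀ y, (G y).toReal = u₁ y + u₂ y := fun y => by
    rw [hG_def, hg₁_def, hg₂_def]
    simp [ENNReal.toReal_add ofReal_ne_top ofReal_ne_top,
      ENNReal.toReal_ofReal (h01 y), ENNReal.toReal_ofReal (h02 y)]
  have habs : ∀ (h : ℝ≥0) (y : E), |u y - S.subordR m h u y|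
      ≤ (G y).toReal - (S.subord m h G y).toReal := fun h y => by
    rw [hkey h y, hGtoReal y, hsplit h y,
      ENNReal.toReal_add (hQ1fin h y) (hQ2fin h y)]
    have hb1 : 0 ≤ (S.subord m h g₁ y).toReal := ENNReal.toReal_nonneg
    have hb2 : 0 ≤ (S.subord m h g₂ y).toReal := ENNReal.toReal_nonneg
    have ha1 := hB₁ h y
    have ha2 := hB₂ h y
    rw [abs_le]
    constructor <;> simp only [hu_def] <;> nlinarith
  have hofabs : ∀ (h : ℝ≥0) (y : E),
      ENNReal.ofReal (|u y - S.subordR m h u y|) ≤ G y - S.subord m h G y := fun h y => by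
    calc ENNReal.ofReal (|u y - S.subordR m h u y|)
        ≤ ENNReal.ofReal ((G y).toReal - (S.subord m h G y).toReal) :=
          ENNReal.ofReal_le_ofReal (habs h y)
      _ = G y - S.subord m h G y := by
          rw [← ENNReal.toReal_sub_of_le (hQG h y) (hGfin y),
            ENNReal.ofReal_toReal (ne_top_of_le_ne_top (hGfin y) tsub_le_self)]
  -- the per-interval bound
  have hterm : ∀ t' h : ℝ≥0,
      S.subordR m t' (fun y => |u y - S.subordR m h u y|) x
        ≤ (S.subord m t' G x).toReal - (S.subord m (t' + h) G x).toReal := fun t' h => by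
    have hfm : Measurable fun y => |u y - S.subordR m h u y| :=
      ((hu₁.sub hu₂).sub (hQu h)).abs
    have hle : ∀ y, ENNReal.ofReal (|u y - S.subordR m h u y|) ≤ G y :=
      fun y => (hofabs h y).trans tsub_le_self
    have hfinn : ∀ s : ℝ≥0,
        ∫⁻ y, ENNReal.ofReal (|u y - S.subordR m h u y|) ∂(S.P s x) ≠ ⊤ := fun s =>
      ne_top_of_le_ne_top (hGfin x) ((lintegral_mono hle).trans (hsmG s x))
    rw [smg_subordR_eq S m hJM t' hfm (fun y => abs_nonneg _) x hfinn]
    have hQhm : Measurable fun y => S.subord m h G y := smg_meas S m hJM hmsub h hGm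
    have hKQ : Measurable fun s : ℝ≥0 => ∫⁻ y, S.subord m h G y ∂(S.P s x) :=
      (hJM _ hQhm).comp measurable_prodMk_right
    have step2 : S.subord m t' (fun y => G y - S.subord m h G y) x
        = S.subord m t' G x - S.subord m t' (fun y => S.subord m h G y) x := by
      have inner : ∀ s : ℝ≥0, ∫⁻ y, (G y - S.subord m h G y) ∂(S.P s x)
          = (∫⁻ y, G y ∂(S.P s x)) - ∫⁻ y, S.subord m h G y ∂(S.P s x) := fun s =>
        lintegral_sub hQhm
          (ne_top_of_le_ne_top (hGfin x)
            ((lintegral_mono fun y => hQG h y).trans (hsmG s x)))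
          (ae_of_all _ fun y => hQG h y)
      calc S.subord m t' (fun y => G y - S.subord m h G y) x
          = ∫⁻ s, ((∫⁻ y, G y ∂(S.P s x)) - ∫⁻ y, S.subord m h G y ∂(S.P s x)) ∂(m t') :=
            lintegral_congr inner
        _ = S.subord m t' G x - S.subord m t' (fun y => S.subord m h G y) x :=
            lintegral_sub hKQ
              (ne_top_of_le_ne_top (hGfin x)
                ((smg_mono S m t' (fun y => hQG h y) x).trans (hQG t' x)))
              (ae_of_all _ fun s => lintegral_mono fun y => hQG h y)
    have step3 : S.subord m t' (fun y => S.subord m h G y) x = S.subord m (t' + h) G x :=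
      (smg_add S m hJM hmsub hmconv t' h hGm x).symm
    have hmono2 : S.subord m (t' + h) G x ≤ S.subord m t' G x := by
      rw [← step3]
      exact smg_mono S m t' (fun y => hQG h y) x
    have hfin' : S.subord m t' G x ≠ ⊤ := ne_top_of_le_ne_top (hGfin x) (hQG t' x)
    calc (S.subord m t' (fun y => ENNReal.ofReal (|u y - S.subordR m h u y|)) x).toReal
        ≤ (S.subord m t' G x - S.subord m (t' + h) G x).toReal := by
          refine ENNReal.toReal_mono (ne_top_of_le_ne_top hfin' tsub_le_self) ?_
          rw [← step3, ← step2]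
          exact smg_mono S m t' (hofabs h) x
      _ = (S.subord m t' G x).toReal - (S.subord m (t' + h) G x).toReal :=
          ENNReal.toReal_sub_of_le hmono2 hfin'
  -- the last-term bound
  have hlast : ∀ t'' : ℝ≥0,
      S.subordR m t'' (fun y => |u y|) x ≤ (S.subord m t'' G x).toReal := fun t'' => by
    have hfm : Measurable fun y => |u y| := (hu₁.sub hu₂).abs
    have hofb : ∀ y, ENNReal.ofReal (|u y|) ≤ G y := fun y => by
      have h1 : |u y| ≤ u₁ y + u₂ y := by
        simp only [hu_def]
        calc |u₁ y - u₂ y| ≤ |u₁ y| + |u₂ y| := abs_sub _ _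
          _ = u₁ y + u₂ y := by rw [abs_of_nonneg (h01 y), abs_of_nonneg (h02 y)]
      calc ENNReal.ofReal (|u y|) ≤ ENNReal.ofReal (u₁ y + u₂ y) :=
            ENNReal.ofReal_le_ofReal h1
        _ = G y := by rw [hG_def, hg₁_def, hg₂_def, ENNReal.ofReal_add (h01 y) (h02 y)]
    have hfinn : ∀ s : ℝ≥0, ∫⁻ y, ENNReal.ofReal (|u y|) ∂(S.P s x) ≠ ⊤ := fun s =>
      ne_top_of_le_ne_top (hGfin x) ((lintegral_mono hofb).trans (hsmG s x))
    rw [smg_subordR_eq S m hJM t'' hfm (fun y => abs_nonneg _) x hfinn]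
    exact ENNReal.toReal_mono (ne_top_of_le_ne_top (hGfin x) (hQG t'' x))
      (smg_mono S m t'' hofb x)
  -- assemble along the partition
  set B : ℕ → ℝ := fun k =>
    (S.subord m (τ.t ⟨min k τ.n, Nat.lt_succ_of_le (min_le_right _ _)⟩) G x).toReal
    with hB_def
  have hBcast : ∀ i : Fin τ.n, (S.subord m (τ.t i.castSucc) G x).toReal = B i := fun i => by
    have : (⟨min (i : ℕ) τ.n, Nat.lt_succ_of_le (min_le_right _ _)⟩ : Fin (τ.n + 1))
        = i.castSucc := by
      apply Fin.ext
      simp [Nat.min_eq_left (le_of_lt i.isLt)]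
    rw [hB_def]; simp only [this]
  have hBsucc : ∀ i : Fin τ.n, (S.subord m (τ.t i.succ) G x).toReal = B ((i : ℕ) + 1) :=
    fun i => by
    have : (⟨min ((i : ℕ) + 1) τ.n, Nat.lt_succ_of_le (min_le_right _ _)⟩ : Fin (τ.n + 1))
        = i.succ := by
      apply Fin.ext
      simp [Nat.min_eq_left i.isLt]
    rw [hB_def]; simp only [this]
  have hB0 : B 0 = u₁ x + u₂ x := by
    have h0fin : (⟨min 0 τ.n, Nat.lt_succ_of_le (min_le_right _ _)⟩ : Fin (τ.n + 1)) = 0 := by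
      apply Fin.ext; simp
    rw [hB_def]; simp only [h0fin, τ.first, smg_zero S m hJM hm0 hGm x, hGtoReal x]
  have hBn : B τ.n = (S.subord m (τ.t (Fin.last τ.n)) G x).toReal := by
    have hnfin : (⟨min τ.n τ.n, Nat.lt_succ_of_le (min_le_right _ _)⟩ : Fin (τ.n + 1))
        = Fin.last τ.n := by
      apply Fin.ext; simp [Fin.last]
    rw [hB_def]; simp only [hnfin]
  have hsum : (∑ i : Fin τ.n, S.subordR m (τ.t i.castSucc)
        (fun y => |u y - S.subordR m (τ.t i.succ - τ.t i.castSucc) u y|) x)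
      ≤ B 0 - B τ.n := by
    have hsum1 : (∑ i : Fin τ.n, S.subordR m (τ.t i.castSucc)
          (fun y => |u y - S.subordR m (τ.t i.succ - τ.t i.castSucc) u y|) x)
        ≤ ∑ i : Fin τ.n, (B i - B ((i : ℕ) + 1)) := by
      refine Finset.sum_le_sum fun i _ => ?_
      have hadd : τ.t i.castSucc + (τ.t i.succ - τ.t i.castSucc) = τ.t i.succ :=
        add_tsub_cancel_of_le (τ.mono (Fin.castSucc_le_succ i))
      have := hterm (τ.t i.castSucc) (τ.t i.succ - τ.t i.castSucc)
      rw [hadd, hBcast i, hBsucc i] at this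
      exact this
    have hsum2 : (∑ i : Fin τ.n, (B i - B ((i : ℕ) + 1))) = B 0 - B τ.n := by
      rw [Fin.sum_univ_eq_sum_range (fun k => B k - B (k + 1)) τ.n]
      exact Finset.sum_range_sub' B τ.n
    exact hsum1.trans (le_of_eq hsum2)
  have hV : S.Vsub m u τ x ≤ (B 0 - B τ.n) + B τ.n := by
    unfold SubMarkovSemigroup.Vsub
    refine add_le_add hsum ?_
    rw [hBn]
    exact hlast (τ.t (Fin.last τ.n))
  calc S.Vsub m u τ x ≤ (B 0 - B τ.n) + B τ.n := hV
    _ = B 0 := by ring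
    _ = u₁ x + u₂ x := hB0

end Helpers

/-- For a convolution semigroup `(μ_t)` of sub-probability measures on
`[0,∞)` with `μ_0 = δ_0`, the subordinated family `(P^μ_t)` is a sub-Markovian semigroup
of kernels; every `(P_t)`-supermedian function is `(P^μ_t)`-supermedian; and for
`u = u₁ - u₂` with `u₁, u₂` real-valued `(P_t)`-supermedian,
`V^{(P^μ_t)}(u) ≤ u₁ + u₂` pointwise. -/
theorem statement16 {E : Type*} [MeasurableSpace E] (S : SubMarkovSemigroup E)
    (hJM : ∀ f : E → ℝ≥0∞, Measurable f →
      Measurable (fun pr : ℝ≥0 × E => ∫⁻ y, f y ∂(S.P pr.1 pr.2)))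
    (m : ℝ≥0 → Measure ℝ≥0)
    (hm0 : m 0 = Measure.dirac 0)
    (hmsub : ∀ t : ℝ≥0, m t Set.univ ≤ 1)
    (hmconv : ∀ t s : ℝ≥0,
      m (t + s) = Measure.map (fun pr : ℝ≥0 × ℝ≥0 => pr.1 + pr.2) ((m t).prod (m s))) :
    ((∀ (t : ℝ≥0) (f : E → ℝ≥0∞), Measurable f →
        Measurable (fun x => S.subord m t f x)) ∧
      (∀ (t : ℝ≥0) (x : E), S.subord m t (fun _ => 1) x ≤ 1) ∧
      (∀ f : E → ℝ≥0∞, Measurable f → ∀ x : E, S.subord m 0 f x = f x) ∧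
      (∀ (t s : ℝ≥0) (f : E → ℝ≥0∞), Measurable f → ∀ x : E,
        S.subord m (t + s) f x = S.subord m t (fun y => S.subord m s f y) x)) ∧
    (∀ g : E → ℝ≥0∞, Measurable g → (∀ (t : ℝ≥0) (x : E), ∫⁻ y, g y ∂(S.P t x) ≤ g x) →
      ∀ (t : ℝ≥0) (x : E), S.subord m t g x ≤ g x) ∧
    (∀ u₁ u₂ : E → ℝ, Measurable u₁ → Measurable u₂ →
      (∀ x, 0 ≤ u₁ x) → (∀ x, 0 ≤ u₂ x) →
      (∀ (t : ℝ≥0) (x : E),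
        ∫⁻ y, ENNReal.ofReal (u₁ y) ∂(S.P t x) ≤ ENNReal.ofReal (u₁ x)) →
      (∀ (t : ℝ≥0) (x : E),
        ∫⁻ y, ENNReal.ofReal (u₂ y) ∂(S.P t x) ≤ ENNReal.ofReal (u₂ x)) →
      ∀ x : E, (⨆ τ : FinPartition,
          ENNReal.ofReal (S.Vsub m (fun y => u₁ y - u₂ y) τ x))
        ≤ ENNReal.ofReal (u₁ x + u₂ x)) := by
  refine ⟨⟨fun t f hf => smg_meas S m hJM hmsub t hf,
    fun t x => ?_,
    fun f hf x => smg_zero S m hJM hm0 hf x,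
    fun t s f hf x => smg_add S m hJM hmsub hmconv t s hf x⟩,
    fun g _ hg t x => smg_superm S m hmsub hg t x,
    fun u₁ u₂ hu₁ hu₂ h01 h02 hsm₁ hsm₂ x => ?_⟩
  · calc S.subord m t (fun _ => 1) x
        = ∫⁻ s, (S.P s x) Set.univ ∂(m t) := by
          refine lintegral_congr fun s => ?_
          simp [lintegral_one]
      _ ≤ ∫⁻ _, 1 ∂(m t) := lintegral_mono fun s => S.subMarkov s x
      _ = m t Set.univ := by simp [lintegral_one]
      _ ≤ 1 := hmsub t
  · refine iSup_le fun τ => ENNReal.ofReal_le_ofReal ?_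
    exact smg_partC S m hJM hm0 hmsub hmconv u₁ u₂ hu₁ hu₂ h01 h02 hsm₁ hsm₂ x τ
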